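/- Let X and K be finite-dimensional real Hilbert spaces, b ∈ K, and let 𝔏 : X → K be a bounded linear operator such that range 𝔏 = K and 𝔏*𝔏 = P_V, the orthogonal projection onto V := range 𝔏* ⊆ X. Define the affine map 𝔄x := 𝔏x + b. Then for every proper lower-semicontinuous convex function ψ on K and every γ > 0, the Moreau-enhanced functions satisfy (ψ ∘ 𝔄)_{γ^{-1/2}I}(x) = (ψ_{γ^{-1/2}I})(𝔄x) for all x ∈ X, where for a function f the Moreau enhancement is f_{γ^{-1/2}I} := f − ⁽γ⁾f. -/

import Mathlib

noncomputable section

/-- Lemma 3 of the paper, second identity.  If `𝔏 : X → K` is a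
surjective bounded linear operator with `𝔏*𝔏 = P_V` (the orthogonal projection onto
`V = range 𝔏*`), then for every proper l.s.c. convex `ψ : K → (−∞,+∞]` and `γ > 0`,
the Moreau-enhanced functions (`f_{γ^{-1/2}I} = f − ᵞf`) satisfy
`(ψ ∘ 𝔄)_{γ^{-1/2}I}(x) = (ψ_{γ^{-1/2}I})(𝔄x)` for all `x`, with `𝔄x = 𝔏x + b`. -/
theorem moreauEnhanced_affine_composition
    {X K : Type*}
    [NormedAddCommGroup X] [InnerProductSpace ℝ X] [FiniteDimensional ℝ X]
    [NormedAddCommGroup K] [InnerProductSpace ℝ K] [FiniteDimensional ℝ K]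
    (L : X →L[ℝ] K) (b : K) (hsurj : Function.Surjective L)
    (hproj : ∀ x : X,
      (ContinuousLinearMap.adjoint L) (L x) =
        (Submodule.orthogonalProjectionOnto (LinearMap.range (ContinuousLinearMap.adjoint L : K →ₗ[ℝ] X)) x : X))
    (ψ : K → EReal) (hbot : ∀ u, ψ u ≠ ⊥) (htop : ∃ u, ψ u ≠ ⊤)
    (hlsc : LowerSemicontinuous ψ)
    (hconv : Convex ℝ {p : K × ℝ | ψ p.1 ≤ (p.2 : EReal)})
    (γ : ℝ) (hγ : 0 < γ) :
    ∀ x : X,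
      ψ (L x + b) - (⨅ u : X, (ψ (L u + b) + ((‖x - u‖ ^ 2 / (2 * γ) : ℝ) : EReal)))
        = ψ (L x + b) -
            ⨅ w : K, (ψ w + ((‖(L x + b) - w‖ ^ 2 / (2 * γ) : ℝ) : EReal)) := by
  intro x
  set L' := ContinuousLinearMap.adjoint L with hL'
  set V := LinearMap.range (L' : K →ₗ[ℝ] X) with hV
  -- L ∘ L* = id
  have hLL : ∀ y : K, L (L' y) = y := by
    intro y
    obtain ⟨z, rfl⟩ := hsurj y
    rw [hL', hproj z]
    have hmem : z - (Submodule.orthogonalProjectionOnto V z : X) ∈ Vᗮ :=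
      V.sub_starProjection_mem_orthogonal z
    have hz : L (z - (Submodule.orthogonalProjectionOnto V z : X)) = 0 := by
      have h2 : ‖L (z - (Submodule.orthogonalProjectionOnto V z : X))‖ ^ 2 = 0 := by
        set w := z - (Submodule.orthogonalProjectionOnto V z : X) with hw
        have h3 : (‖L w‖ : ℝ) ^ 2 = inner ℝ (L w) (L w) := (real_inner_self_eq_norm_sq _).symm
        rw [h3, ← ContinuousLinearMap.adjoint_inner_left, ← hL', hproj]
        rw [Submodule.orthogonalProjectionOnto_apply_of_mem_orthogonal hmem]
        simp
      have := pow_eq_zero_iff (n := 2) (by norm_num) |>.mp h2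
      simpa using this
    have h4 : L z - L (Submodule.orthogonalProjectionOnto V z : X) = 0 := by rw [← map_sub]; exact hz
    exact (sub_eq_zero.mp h4).symm
  -- ‖L* y‖ = ‖y‖
  have hLn : ∀ y : K, ‖L' y‖ = ‖y‖ := by
    intro y
    have h1 : ‖L' y‖ ^ 2 = ‖y‖ ^ 2 := by
      rw [← real_inner_self_eq_norm_sq, ← real_inner_self_eq_norm_sq, hL',
        ContinuousLinearMap.adjoint_inner_left, ← hL', hLL]
    exact (sq_eq_sq₀ (norm_nonneg _) (norm_nonneg _)).mp h1
  -- ‖L v‖ ≤ ‖v‖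
  have hLle : ∀ v : X, ‖L v‖ ≤ ‖v‖ := by
    intro v
    have h1 : ‖L v‖ ^ 2 ≤ ‖v‖ ^ 2 := by
      have h3 : (‖L v‖ : ℝ) ^ 2 = inner ℝ (L v) (L v) := (real_inner_self_eq_norm_sq _).symm
      rw [h3, ← ContinuousLinearMap.adjoint_inner_left, ← hL', hproj]
      calc (inner ℝ ((Submodule.orthogonalProjectionOnto V v : X)) v : ℝ)
          ≤ ‖(Submodule.orthogonalProjectionOnto V v : X)‖ * ‖v‖ := real_inner_le_norm _ _
        _ ≤ ‖v‖ * ‖v‖ := by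
            have h5 : ‖(Submodule.orthogonalProjectionOnto V v : X)‖ ≤ ‖v‖ := by
              simpa using Submodule.orthogonalProjectionOnto_norm_le V |>.trans (le_refl 1) |> fun h =>
                (Submodule.orthogonalProjectionOnto V).le_opNorm v |>.trans
                  (by nlinarith [norm_nonneg v, Submodule.orthogonalProjectionOnto_norm_le V,
                    (Submodule.orthogonalProjectionOnto V).le_opNorm v])
            exact mul_le_mul_of_nonneg_right h5 (norm_nonneg _)
        _ = ‖v‖ ^ 2 := (sq ‖v‖).symm
    nlinarith [norm_nonneg (L v), norm_nonneg v]
  -- equality of infima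
  have hinf : (⨅ u : X, (ψ (L u + b) + ((‖x - u‖ ^ 2 / (2 * γ) : ℝ) : EReal)))
      = ⨅ w : K, (ψ w + ((‖(L x + b) - w‖ ^ 2 / (2 * γ) : ℝ) : EReal)) := by
    apply le_antisymm
    · -- inf_u ≤ inf_w : take u = x - L' (L x + b - w)
      refine le_iInf fun w => ?_
      set u := x - L' (L x + b - w) with hu
      have hLu : L u + b = w := by
        rw [hu, map_sub, hLL]; abel
      have hnorm : ‖x - u‖ = ‖(L x + b) - w‖ := by
        rw [hu]; simpa using hLn (L x + b - w)
      refine (iInf_le _ u).trans ?_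
      rw [hLu, hnorm]
    · -- inf_w ≤ inf_u : take w = L u + b
      refine le_iInf fun u => ?_
      refine (iInf_le _ (L u + b)).trans ?_
      apply add_le_add_right
      rw [EReal.coe_le_coe_iff]
      have h1 : L x + b - (L u + b) = L (x - u) := by rw [map_sub]; abel
      rw [h1]
      have h2 : ‖L (x - u)‖ ^ 2 ≤ ‖x - u‖ ^ 2 := by
        have := hLle (x - u)
        nlinarith [norm_nonneg (L (x - u)), norm_nonneg (x - u)]
      exact div_le_div_of_nonneg_right h2 (by linarith) |>.trans_eq rfl
  rw [hinf]
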